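/- Let K be a real symmetric positive definite matrix indexed by a finite set I, let x ∈ I, and let S ⊆ T ⊆ I \ {x}. For a subset A ⊆ I \ {x}, let K[A] denote the principal submatrix of K indexed by A and k_A := (K(x,j))_{j∈A} the column vector of cross-covariances. Then the conditional variance (mean squared prediction error) is monotone nonincreasing in the conditioning set: K(x,x) − k_T^⊤ K[T]^{−1} k_T ≤ K(x,x) − k_S^⊤ K[S]^{−1} k_S. -/

import Mathlib

open Matrix

/-- The principal submatrix of `K` with rows and columns indexed by the finite set `S`. -/
def principalSubmatrix {I : Type*} (K : Matrix I I ℝ) (S : Finset I) :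
    Matrix {a // a ∈ S} {a // a ∈ S} ℝ :=
  K.submatrix (fun a => a.1) (fun a => a.1)

/-- The cross-covariance vector `k_S = (K(x,j))_{j ∈ S}`. -/
def crossCov {I : Type*} (K : Matrix I I ℝ) (x : I) (S : Finset I) :
    {a // a ∈ S} → ℝ :=
  fun j => K x j.1

/-- Extension of a vector indexed by a subset to the whole index set, by zero. -/
def extZero {I : Type*} [DecidableEq I] (A : Finset I) (w : {a // a ∈ A} → ℝ) : I → ℝ :=
  fun i => if h : i ∈ A then w ⟨i, h⟩ else 0

lemma dot_restrict {I : Type*} [Fintype I] [DecidableEq I] (A : Finset I) (r : I → ℝ)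
    (w : {a // a ∈ A} → ℝ) :
    (fun j : {a // a ∈ A} => r j.1) ⬝ᵥ w = r ⬝ᵥ extZero A w := by
  classical
  have h1 : ∀ i ∈ Finset.univ, i ∉ A → r i * extZero A w i = 0 := by
    intro i _ hi; simp [extZero, hi]
  have h2 : (∑ i ∈ A, r i * extZero A w i) = ∑ i, r i * extZero A w i :=
    Finset.sum_subset A.subset_univ h1
  have h3 : (∑ i ∈ A, r i * extZero A w i)
      = ∑ j : {a // a ∈ A}, r j.1 * extZero A w j.1 :=
    Finset.sum_subtype A (fun _ => Iff.rfl) _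
  simp only [dotProduct, ← h2, h3]
  refine Finset.sum_congr rfl fun j _ => ?_
  simp [extZero, j.2]

lemma quad_extZero {I : Type*} [Fintype I] [DecidableEq I] (K : Matrix I I ℝ) (A : Finset I)
    (w : {a // a ∈ A} → ℝ) :
    w ⬝ᵥ (principalSubmatrix K A *ᵥ w) = extZero A w ⬝ᵥ (K *ᵥ extZero A w) := by
  classical
  have hmv : (principalSubmatrix K A *ᵥ w) = fun j => (K *ᵥ extZero A w) j.1 := by
    funext j
    have := dot_restrict A (K j.1) w
    simpa [mulVec, principalSubmatrix, submatrix] using this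
  rw [hmv, dotProduct_comm]
  have := dot_restrict A (K *ᵥ extZero A w) w
  rw [this, dotProduct_comm]

lemma extZero_ne_zero {I : Type*} [DecidableEq I] (A : Finset I) {w : {a // a ∈ A} → ℝ}
    (hw : w ≠ 0) : extZero A w ≠ 0 := by
  obtain ⟨j, hj⟩ := Function.ne_iff.1 hw
  intro h
  apply hj
  have := congrFun h j.1
  simpa [extZero, j.2] using this

lemma principal_posDef {I : Type*} [Fintype I] [DecidableEq I] {K : Matrix I I ℝ} (hK : K.PosDef)
    (A : Finset I) : (principalSubmatrix K A).PosDef := by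
  classical
  refine PosDef.of_dotProduct_mulVec_pos (hK.1.submatrix _) fun w hw => ?_
  have h := hK.dotProduct_mulVec_pos (extZero_ne_zero A hw)
  have hq := quad_extZero K A w
  simpa [hq] using h

/-- **Monotonicity of the conditional variance (MSPE).** Let `K` be a real symmetric positive
definite matrix indexed by a finite set `I`, let `x ∈ I`, and let `S ⊆ T ⊆ I \ {x}`. Then
`K(x,x) − k_T^⊤ K[T]⁻¹ k_T ≤ K(x,x) − k_S^⊤ K[S]⁻¹ k_S`. -/
theorem mspe_monotone {I : Type*} [Fintype I] [DecidableEq I]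
    (K : Matrix I I ℝ) (hK : K.PosDef) (x : I) (S T : Finset I)
    (hST : S ⊆ T) (hxT : x ∉ T) :
    K x x - crossCov K x T ⬝ᵥ ((principalSubmatrix K T)⁻¹ *ᵥ crossCov K x T)
      ≤ K x x - crossCov K x S ⬝ᵥ ((principalSubmatrix K S)⁻¹ *ᵥ crossCov K x S) := by
  classical
  set BS := principalSubmatrix K S with hBSdef
  set BT := principalSubmatrix K T with hBTdef
  set kS := crossCov K x S with hkSdef
  set kT := crossCov K x T with hkTdef
  have hBS := principal_posDef hK S
  have hBT := principal_posDef hK T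
  set wS := BS⁻¹ *ᵥ kS with hwSdef
  set vT := BT⁻¹ *ᵥ kT with hvTdef
  have hBSwS : BS *ᵥ wS = kS := by
    rw [hwSdef, mulVec_mulVec, mul_nonsing_inv _ hBS.det_pos.ne'.isUnit, one_mulVec]
  have hBTvT : BT *ᵥ vT = kT := by
    rw [hvTdef, mulVec_mulVec, mul_nonsing_inv _ hBT.det_pos.ne'.isUnit, one_mulVec]
  -- the extension of the S-optimum to T
  set u : {a // a ∈ T} → ℝ := fun j => if h : j.1 ∈ S then wS ⟨j.1, h⟩ else 0 with hudef
  have hext : extZero T u = extZero S wS := by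
    funext i
    by_cases hiS : i ∈ S
    · simp [extZero, hudef, hiS, hST hiS]
    · by_cases hiT : i ∈ T <;> simp [extZero, hudef, hiS, hiT]
  -- k_T ⬝ u = k_S ⬝ w_S
  have hb : kT ⬝ᵥ u = kS ⬝ᵥ wS := by
    have h1 := dot_restrict T (fun i => K x i) u
    have h2 := dot_restrict S (fun i => K x i) wS
    have e1 : kT ⬝ᵥ u = (fun i => K x i) ⬝ᵥ extZero T u := h1
    have e2 : kS ⬝ᵥ wS = (fun i => K x i) ⬝ᵥ extZero S wS := h2
    rw [e1, e2, hext]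
  -- u ⬝ (B_T u) = k_S ⬝ w_S
  have hc : u ⬝ᵥ (BT *ᵥ u) = kS ⬝ᵥ wS := by
    rw [quad_extZero K T u, hext, ← quad_extZero K S wS, ← hBSdef, hBSwS, dotProduct_comm]
  -- symmetric: v_T ⬝ (B_T u) = k_T ⬝ u
  have hsym : vT ⬝ᵥ (BT *ᵥ u) = kT ⬝ᵥ u := by
    rw [dotProduct_mulVec]
    congr 1
    have hherm : BTᵀ = BT := hBT.1
    calc vT ᵥ* BT = BTᵀ *ᵥ vT := by rw [← mulVec_transpose]
      _ = kT := by rw [hherm, hBTvT]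
  -- positivity of the quadratic form at d = u - v_T
  have hpos : 0 ≤ (u - vT) ⬝ᵥ (BT *ᵥ (u - vT)) := by
    have h := hBT.posSemidef.re_dotProduct_nonneg (u - vT)
    simpa using h
  have hexpand : (u - vT) ⬝ᵥ (BT *ᵥ (u - vT))
      = kT ⬝ᵥ vT - kS ⬝ᵥ wS := by
    rw [mulVec_sub, dotProduct_sub, sub_dotProduct, sub_dotProduct, hBTvT]
    have h1 : u ⬝ᵥ kT = kS ⬝ᵥ wS := by rw [dotProduct_comm, hb]
    have h2 : vT ⬝ᵥ kT = kT ⬝ᵥ vT := dotProduct_comm _ _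
    rw [hc, hsym, hb, h1, h2]
    ring
  have : kS ⬝ᵥ wS ≤ kT ⬝ᵥ vT := by linarith [hexpand ▸ hpos]
  linarith
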